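/- arXiv:2207.09528 — 5 statements merged into one kernel-verified Lean document; each statement's English description precedes it below -/
import Mathlib

section
/- Fix an integer d ≥ 1 and let μ_d ≤ ℂˣ be the subgroup of d-th roots of unity. For (r₀, r₁, r₂) ∈ ℤ³, the group homomorphism χ_r : ℂˣ × μ_d × μ_d × μ_d → ℂˣ defined by χ_r(λ, ζ₀, ζ₁, ζ₂) = λ^{r₀+r₁+r₂}·ζ₀^{r₀}·ζ₁^{r₁}·ζ₂^{r₂} (integer powers of units via zpow) is the trivial homomorphism if and only if (r₀, r₁, r₂) lies in the ℤ-span of the vectors (d, 0, −d) and (0, d, −d). -/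
/-- The character `χ_r : ℂˣ × μ_d × μ_d × μ_d → ℂˣ`,
`(λ, ζ₀, ζ₁, ζ₂) ↦ λ^(r₀+r₁+r₂) ζ₀^{r₀} ζ₁^{r₁} ζ₂^{r₂}`, is trivial if and only if
`(r₀,r₁,r₂)` lies in the `ℤ`-span of `(d,0,-d)` and `(0,d,-d)`.
This is the statement that the `G`-equivariant line bundle
`𝒪^G_{P²}(r₀D₀+r₁D₁+r₂D₂)` is trivial iff `(r₀,r₁,r₂) ∈ ⟨(d,0,-d),(0,d,-d)⟩`. -/
theorem character_trivial_iff_span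
    (d : ℕ) (hd : 1 ≤ d) (r₀ r₁ r₂ : ℤ) :
    (∀ (l : ℂˣ) (ζ₀ ζ₁ ζ₂ : rootsOfUnity d ℂ),
        l ^ (r₀ + r₁ + r₂) * (ζ₀ : ℂˣ) ^ r₀ * (ζ₁ : ℂˣ) ^ r₁ * (ζ₂ : ℂˣ) ^ r₂ = 1) ↔
    ((r₀, r₁, r₂) : ℤ × ℤ × ℤ) ∈
      Submodule.span ℤ {(((d : ℤ), 0, -(d : ℤ)) : ℤ × ℤ × ℤ), ((0, (d : ℤ), -(d : ℤ)) : ℤ × ℤ × ℤ)} := by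
  haveI : NeZero d := ⟨by omega⟩
  rw [Submodule.mem_span_pair]
  constructor
  · intro h
    -- the sum of exponents is zero
    have hsum : r₀ + r₁ + r₂ = 0 := by
      have h2 := h (Units.mk0 (2 : ℂ) two_ne_zero) 1 1 1
      simp only [OneMemClass.coe_one, one_zpow, mul_one] at h2
      have h2' : ((2 : ℂ)) ^ (r₀ + r₁ + r₂) = 1 := by
        have := congrArg (Units.val) h2
        simpa using this
      have habs : ((2 : ℝ)) ^ (r₀ + r₁ + r₂) = 1 := by
        have := congrArg (fun z : ℂ => ‖z‖) h2'
        simpa [norm_zpow] using this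
      have := zpow_right_injective₀ (a := (2 : ℝ)) (by norm_num) (by norm_num)
        (by simpa using habs : (2 : ℝ) ^ (r₀ + r₁ + r₂) = (2 : ℝ) ^ (0 : ℤ))
      exact this
    have hprim := Complex.isPrimitiveRoot_exp d (by omega)
    set ζ : rootsOfUnity d ℂ := hprim.toRootsOfUnity with hζ
    have hζval : ((ζ : ℂˣ) : ℂ) = Complex.exp (2 * Real.pi * Complex.I / d) := by
      simp [hζ, IsPrimitiveRoot.toRootsOfUnity]
    have hdvd : ∀ r : ℤ, (ζ : ℂˣ) ^ r = 1 → (d : ℤ) ∣ r := by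
      intro r hr
      have : ((ζ : ℂˣ) : ℂ) ^ r = 1 := by
        have := congrArg Units.val hr
        simpa using this
      rw [hζval] at this
      exact (hprim.zpow_eq_one_iff_dvd r).mp this
    have h0 : (d : ℤ) ∣ r₀ := by
      have := h 1 ζ 1 1
      simp only [one_zpow, OneMemClass.coe_one, mul_one, one_mul] at this
      exact hdvd r₀ this
    have h1 : (d : ℤ) ∣ r₁ := by
      have := h 1 1 ζ 1
      simp only [one_zpow, OneMemClass.coe_one, mul_one, one_mul] at this
      exact hdvd r₁ this
    obtain ⟨a, ha⟩ := h0
    obtain ⟨b, hb⟩ := h1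
    refine ⟨a, b, ?_⟩
    simp only [Prod.smul_mk, smul_eq_mul, Prod.mk_add_mk, Prod.mk.injEq]
    refine ⟨by linarith, by linarith, by linarith⟩
  · rintro ⟨a, b, hab⟩
    simp only [Prod.smul_mk, smul_eq_mul, Prod.mk_add_mk, Prod.mk.injEq] at hab
    obtain ⟨e0, e1, e2⟩ := hab
    intro l ζ₀ ζ₁ ζ₂
    have hsum : r₀ + r₁ + r₂ = 0 := by rw [← e0, ← e1, ← e2]; ring
    have hpow : ∀ (ζ : rootsOfUnity d ℂ) (c : ℤ), (ζ : ℂˣ) ^ (c * (d : ℤ)) = 1 := by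
      intro ζ c
      have hz : (ζ : ℂˣ) ^ (d : ℕ) = 1 := ζ.2
      rw [mul_comm, zpow_mul]
      rw [show ((d : ℤ)) = ((d : ℕ) : ℤ) by norm_num, zpow_natCast, hz, one_zpow]
    have e0' : r₀ = a * (d : ℤ) := by rw [← e0]; ring
    have e1' : r₁ = b * (d : ℤ) := by rw [← e1]; ring
    have e2' : r₂ = (-(a + b)) * (d : ℤ) := by rw [← e2]; ring
    rw [hsum, e0', e1', e2', zpow_zero, hpow, hpow, hpow]
    simp
end

section
/- Let d ≥ 2 be an integer, a, b : Fin d → ℂ, and x₀, x₁ ∈ ℂ. Then det K(a,b,x₀,x₁) = x₀^d·(∏_{i} a_i) + (−1)^{d−1}·x₁^d·(∏_i b_i). -/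
/-- The Kasteleyn matrix `K̃_α(x)` of a zig-zag path at the line at infinity `x₂ = 0`:
the `d × d` matrix with `(i,i)` entry `a i * x₀`, `(i+1, i)` entry `b i * x₁`
(row index cyclic modulo `d`), and all other entries `0`. -/
def Kmat (d : ℕ) [NeZero d] (a b : Fin d → ℂ) (x₀ x₁ : ℂ) : Matrix (Fin d) (Fin d) ℂ :=
  fun i j => if i = j then a j * x₀ else if i = j + 1 then b j * x₁ else 0

lemma fin_eq_add_one_iff {m : ℕ} [NeZero m] (x y : Fin m) :
    x = y + 1 ↔ (x : ℕ) = ((y : ℕ) + 1) % m := by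
  rw [Fin.ext_iff, Fin.val_add]
  simp [Fin.val_one']

/-- `det K̃_α(x) = x₀^d ∏ aᵢ + (-1)^(d-1) x₁^d ∏ bᵢ`. -/
theorem det_Kmat (d : ℕ) [NeZero d] (hd : 2 ≤ d) (a b : Fin d → ℂ) (x₀ x₁ : ℂ) :
    (Kmat d a b x₀ x₁).det =
      x₀ ^ d * (∏ i, a i) + (-1 : ℂ) ^ (d - 1) * x₁ ^ d * (∏ i, b i) := by
  obtain ⟨n, rfl⟩ : ∃ n, d = n + 1 := ⟨d - 1, by omega⟩
  have hn : 1 ≤ n := by omega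
  rw [Matrix.det_succ_row_zero]
  have h0last : (0 : Fin (n+1)) ≠ Fin.last n := by
    simp only [ne_eq, Fin.ext_iff, Fin.val_zero, Fin.val_last]; omega
  rw [← Finset.sum_subset (Finset.subset_univ {0, Fin.last n}) ?_]
  · rw [Finset.sum_pair h0last]
    -- first minor : lower triangular
    have hm1 : ((Kmat (n+1) a b x₀ x₁).submatrix Fin.succ ((0 : Fin (n+1)).succAbove)).det
        = ∏ i : Fin n, (a i.succ * x₀) := by
      rw [Matrix.det_of_lowerTriangular]
      · refine Finset.prod_congr rfl fun i _ => ?_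
        have he : ((Kmat (n+1) a b x₀ x₁).submatrix Fin.succ ((0 : Fin (n+1)).succAbove)) i i
            = Kmat (n+1) a b x₀ x₁ i.succ i.succ := by
          rw [Matrix.submatrix_apply, Fin.succAbove_zero]
        rw [he, Kmat, if_pos rfl]
      · intro i j hij
        have hij' : (i : ℕ) < j := hij
        have h1 : (i.succ : Fin (n+1)) ≠ j.succ := by
          simp only [ne_eq, Fin.ext_iff, Fin.val_succ]; omega
        have h2 : (i.succ : Fin (n+1)) ≠ j.succ + 1 := by
          rw [ne_eq, fin_eq_add_one_iff]
          simp only [Fin.val_succ]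
          rcases Nat.lt_or_ge ((j : ℕ) + 1 + 1) (n+1) with hc | hc
          · rw [Nat.mod_eq_of_lt hc]; omega
          · have hj : (j : ℕ) < n := j.isLt
            have he : (j : ℕ) + 1 + 1 = n + 1 := by omega
            rw [he, Nat.mod_self]; omega
        have he : ((Kmat (n+1) a b x₀ x₁).submatrix Fin.succ ((0 : Fin (n+1)).succAbove)) i j
            = Kmat (n+1) a b x₀ x₁ i.succ j.succ := by
          rw [Matrix.submatrix_apply, Fin.succAbove_zero]
        rw [he, Kmat, if_neg h1, if_neg h2]
    -- second minor : upper triangular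
    have hm2 : ((Kmat (n+1) a b x₀ x₁).submatrix Fin.succ ((Fin.last n).succAbove)).det
        = ∏ i : Fin n, (b i.castSucc * x₁) := by
      rw [Matrix.det_of_upperTriangular]
      · refine Finset.prod_congr rfl fun i _ => ?_
        have h1 : (i.succ : Fin (n+1)) ≠ i.castSucc := by
          simp only [ne_eq, Fin.ext_iff, Fin.val_succ, Fin.coe_castSucc]; omega
        have h2 : (i.succ : Fin (n+1)) = i.castSucc + 1 := by
          rw [fin_eq_add_one_iff]
          simp only [Fin.val_succ, Fin.coe_castSucc]
          rw [Nat.mod_eq_of_lt (by omega : (i : ℕ) + 1 < n + 1)]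
        have he : ((Kmat (n+1) a b x₀ x₁).submatrix Fin.succ ((Fin.last n).succAbove)) i i
            = Kmat (n+1) a b x₀ x₁ i.succ i.castSucc := by
          rw [Matrix.submatrix_apply, Fin.succAbove_last]
        rw [he, Kmat, if_neg h1, if_pos h2]
      · intro i j hij
        have hij' : (j : ℕ) < i := hij
        have h1 : (i.succ : Fin (n+1)) ≠ j.castSucc := by
          simp only [ne_eq, Fin.ext_iff, Fin.val_succ, Fin.coe_castSucc]; omega
        have h2 : (i.succ : Fin (n+1)) ≠ j.castSucc + 1 := by
          rw [ne_eq, fin_eq_add_one_iff]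
          simp only [Fin.val_succ, Fin.coe_castSucc]
          rw [Nat.mod_eq_of_lt (by omega : (j : ℕ) + 1 < n + 1)]; omega
        have he : ((Kmat (n+1) a b x₀ x₁).submatrix Fin.succ ((Fin.last n).succAbove)) i j
            = Kmat (n+1) a b x₀ x₁ i.succ j.castSucc := by
          rw [Matrix.submatrix_apply, Fin.succAbove_last]
        rw [he, Kmat, if_neg h1, if_neg h2]
    have hK00 : Kmat (n+1) a b x₀ x₁ 0 0 = a 0 * x₀ := by
      rw [Kmat, if_pos rfl]
    have hK0l : Kmat (n+1) a b x₀ x₁ 0 (Fin.last n) = b (Fin.last n) * x₁ := by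
      have h2 : (0 : Fin (n+1)) = Fin.last n + 1 := by
        rw [fin_eq_add_one_iff]; simp
      rw [Kmat, if_neg h0last, if_pos h2]
    rw [hm1, hm2, hK00, hK0l]
    simp only [Fin.val_zero, pow_zero, one_mul, Fin.val_last, Nat.add_sub_cancel,
      Finset.prod_mul_distrib, Finset.prod_const, Finset.card_univ, Fintype.card_fin]
    rw [Fin.prod_univ_succ a, Fin.prod_univ_castSucc b]
    ring
  · intro j _ hj
    simp only [Finset.mem_insert, Finset.mem_singleton, not_or] at hj
    have h1 : (0 : Fin (n+1)) ≠ j := fun h => hj.1 h.symm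
    have hjn : (j : ℕ) ≠ n := by
      intro h
      exact hj.2 (by rw [Fin.ext_iff, h, Fin.val_last])
    have h2 : (0 : Fin (n+1)) ≠ j + 1 := by
      rw [ne_eq, fin_eq_add_one_iff]
      have hjlt : (j : ℕ) < n + 1 := j.isLt
      rw [Nat.mod_eq_of_lt (by omega)]
      simp
    have h0 : Kmat (n+1) a b x₀ x₁ 0 j = 0 := by
      rw [Kmat, if_neg h1, if_neg h2]
    rw [h0]
    ring
end

section
/- Let d ≥ 2 be an integer, a, b : Fin d → ℂ, and x₀, x₁ ∈ ℂ, with a_i ≠ 0 and b_i ≠ 0 for all i, x₀ ≠ 0, x₁ ≠ 0, and x₀^d·(∏_i a_i) = (−1)^d·x₁^d·(∏_i b_i). Then there exist invertible diagonal d×d complex matrices Ψ and Φ such that Ψ · K(a,b,x₀,x₁) · Φ⁻¹ = 1^#_d. (This is the existence of the trivializations Φ_{α̃ᵢ}, Ψ_{α̃ᵢ} at a point at infinity α̃ᵢ of the spectral curve, which transform the Kasteleyn matrix of a zig-zag path into the standard matrix 1^#_α.) -/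
/-- The standard matrix `1^#_d`: `(i,i)` entry `1`, `(i+1, i)` entry `-1`
(row index cyclic modulo `d`), all other entries `0`. -/
def oneSharp (d : ℕ) [NeZero d] : Matrix (Fin d) (Fin d) ℂ :=
  fun i j => if i = j then 1 else if i = j + 1 then -1 else 0

open Fin.NatCast

/-- At a singular point at infinity (`x₀^d ∏ aᵢ = (-1)^d x₁^d ∏ bᵢ`), there exist
invertible diagonal matrices `Ψ`, `Φ` trivializing the Kasteleyn matrix of the zig-zag
path: `Ψ ⬝ K̃_α(x) ⬝ Φ⁻¹ = 1^#_d`. -/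
theorem exists_trivialization (d : ℕ) [NeZero d] (hd : 2 ≤ d) (a b : Fin d → ℂ)
    (x₀ x₁ : ℂ) (ha : ∀ i, a i ≠ 0) (hb : ∀ i, b i ≠ 0) (hx₀ : x₀ ≠ 0) (hx₁ : x₁ ≠ 0)
    (h : x₀ ^ d * (∏ i, a i) = (-1 : ℂ) ^ d * x₁ ^ d * (∏ i, b i)) :
    ∃ Ψ Φ : Matrix (Fin d) (Fin d) ℂ,
      Ψ.IsDiag ∧ Φ.IsDiag ∧ IsUnit Ψ ∧ IsUnit Φ ∧
      Ψ * Kmat d a b x₀ x₁ * Φ⁻¹ = oneSharp d := by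
  classical
  set r : Fin d → ℂ := fun j => -(a (j + 1) * x₀) / (b j * x₁) with hrdef
  have hrne : ∀ j, r j ≠ 0 := fun j =>
    div_ne_zero (neg_ne_zero.mpr (mul_ne_zero (ha _) hx₀)) (mul_ne_zero (hb _) hx₁)
  have hprodb : (∏ i, b i) * x₁ ^ d ≠ 0 :=
    mul_ne_zero (Finset.prod_ne_zero_iff.mpr fun i _ => hb i) (pow_ne_zero _ hx₁)
  have prodr : ∏ j, r j = 1 := by
    have h1 : ∏ j, a (j + 1) = ∏ j, a j := Equiv.prod_comp (Equiv.addRight (1 : Fin d)) a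
    have hre : ∏ j, r j = ((-1 : ℂ) ^ d * ((∏ j, a j) * x₀ ^ d)) / ((∏ j, b j) * x₁ ^ d) := by
      simp only [hrdef]
      rw [Finset.prod_div_distrib]
      congr 1
      · have e : ∀ j : Fin d, -(a (j + 1) * x₀) = (-1 : ℂ) * a (j + 1) * x₀ :=
          fun j => by ring
        rw [Finset.prod_congr rfl fun j _ => e j, Finset.prod_mul_distrib,
          Finset.prod_mul_distrib, Finset.prod_const, Finset.prod_const,
          Finset.card_univ, Fintype.card_fin, h1]
        ring
      · rw [Finset.prod_mul_distrib]
        simp [Finset.prod_const]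
    rw [hre, div_eq_one_iff_eq hprodb]
    have hsq : ((-1 : ℂ) ^ d) * ((-1 : ℂ) ^ d) = 1 := by
      rw [← pow_add, ← two_mul, pow_mul]; norm_num
    calc (-1 : ℂ) ^ d * ((∏ j, a j) * x₀ ^ d)
        = (-1 : ℂ) ^ d * (x₀ ^ d * ∏ j, a j) := by ring
      _ = (-1 : ℂ) ^ d * ((-1 : ℂ) ^ d * x₁ ^ d * ∏ i, b i) := by rw [h]
      _ = (∏ i, b i) * x₁ ^ d := by rw [← mul_assoc, ← mul_assoc, hsq]; ring
  set f : ℕ → ℂ := fun n => ∏ k ∈ Finset.range n, r k with hfdef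
  set φ : Fin d → ℂ := fun i => f i.val with hφdef
  have hφne : ∀ i, φ i ≠ 0 := fun i =>
    Finset.prod_ne_zero_iff.mpr fun k _ => hrne _
  have hfd : f d = 1 := by
    show ∏ k ∈ Finset.range d, r ↑k = 1
    rw [← Fin.prod_univ_eq_prod_range (fun k => r ↑k) d]
    simpa [Fin.cast_val_eq_self] using prodr
  have step : ∀ j : Fin d, φ (j + 1) = φ j * r j := by
    intro j
    have h1 : ((j + 1 : Fin d)).val = (j.val + 1) % d := by
      rw [Fin.val_add, Fin.val_one', Nat.mod_eq_of_lt (by omega : 1 < d)]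
    rcases Nat.lt_or_ge (j.val + 1) d with hlt | hge
    · have h2 : ((j + 1 : Fin d)).val = j.val + 1 := by rw [h1, Nat.mod_eq_of_lt hlt]
      show f ((j + 1 : Fin d)).val = f j.val * r j
      rw [h2, hfdef]
      simp only [Finset.prod_range_succ, Fin.cast_val_eq_self]
    · have hje : j.val + 1 = d := by have := j.isLt; omega
      have h2 : ((j + 1 : Fin d)).val = 0 := by rw [h1, hje, Nat.mod_self]
      show f ((j + 1 : Fin d)).val = f j.val * r j
      rw [h2]
      have : f (j.val + 1) = f j.val * r j := by
        rw [hfdef]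
        simp only [Finset.prod_range_succ, Fin.cast_val_eq_self]
      rw [hje] at this
      rw [hfdef]; simp only [Finset.range_zero, Finset.prod_empty]
      rw [← this, hfd]
  set ψ : Fin d → ℂ := fun i => φ i / (a i * x₀) with hψdef
  have hψne : ∀ i, ψ i ≠ 0 := fun i =>
    div_ne_zero (hφne i) (mul_ne_zero (ha i) hx₀)
  refine ⟨Matrix.diagonal ψ, Matrix.diagonal φ, Matrix.isDiag_diagonal ψ,
    Matrix.isDiag_diagonal φ, ?_, ?_, ?_⟩
  · rw [Matrix.isUnit_iff_isUnit_det, Matrix.det_diagonal]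
    exact isUnit_iff_ne_zero.mpr (Finset.prod_ne_zero_iff.mpr fun i _ => hψne i)
  · rw [Matrix.isUnit_iff_isUnit_det, Matrix.det_diagonal]
    exact isUnit_iff_ne_zero.mpr (Finset.prod_ne_zero_iff.mpr fun i _ => hφne i)
  · have hinv : (Matrix.diagonal φ)⁻¹ = Matrix.diagonal (fun i => (φ i)⁻¹) :=
      Matrix.inv_eq_right_inv (by
        rw [Matrix.diagonal_mul_diagonal,
          show (fun i => φ i * (φ i)⁻¹) = fun _ => (1 : ℂ) from
            funext fun i => mul_inv_cancel₀ (hφne i), Matrix.diagonal_one])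
    rw [hinv]
    ext i j
    rw [Matrix.mul_diagonal, Matrix.diagonal_mul]
    simp only [Kmat, oneSharp]
    by_cases hij : i = j
    · subst hij
      simp only [eq_self_iff_true, if_true, hψdef]
      rw [div_mul_cancel₀ _ (mul_ne_zero (ha i) hx₀), mul_inv_cancel₀ (hφne i)]
    · rw [if_neg hij, if_neg hij]
      by_cases hij1 : i = j + 1
      · subst hij1
        rw [if_pos rfl, if_pos rfl]
        have key : φ (j + 1) * (b j * x₁) = -(a (j + 1) * x₀) * φ j := by
          rw [step j]
          show φ j * (-(a (j + 1) * x₀) / (b j * x₁)) * (b j * x₁) = _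
          rw [mul_assoc, div_mul_cancel₀ _ (mul_ne_zero (hb j) hx₁)]
          ring
        rw [hψdef]
        show φ (j + 1) / (a (j + 1) * x₀) * (b j * x₁) * (φ j)⁻¹ = -1
        rw [div_mul_eq_mul_div, key, div_mul_eq_mul_div, mul_comm,
          div_eq_iff (mul_ne_zero (ha (j + 1)) hx₀)]
        field_simp [hφne j]
      · rw [if_neg hij1, if_neg hij1]
        simp
end

section
/- Let d ≥ 2 be an integer, a, b : Fin d → ℂ, x₀, x₁ ∈ ℂ, and suppose Ψ and Φ are invertible diagonal d×d complex matrices with Ψ · K(a,b,x₀,x₁) · Φ⁻¹ = 1^#_d. Then the range (column space) of K(a,b,x₀,x₁) equals {v ∈ ℂ^d : ∑_i (Ψ v)_i = 0}, and the linear functional v ↦ ∑_i (Ψ v)_i induces an isomorphism from the cokernel of K(a,b,x₀,x₁) to ℂ. -/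
/-- The linear functional `v ↦ ∑ᵢ vᵢ` on `ℂ^d`. -/
noncomputable def sumLM (d : ℕ) : (Fin d → ℂ) →ₗ[ℂ] ℂ where
  toFun v := ∑ i, v i
  map_add' u v := by simp [Finset.sum_add_distrib]
  map_smul' c v := by simp [Finset.mul_sum]

open scoped Fin.NatCast Fin.CommRing in
lemma oneSharp_range (n : ℕ) :
    LinearMap.range (Matrix.toLin' (oneSharp (n+2))) = LinearMap.ker (sumLM (n+2)) := by
  set d := n + 2
  have hone : (1 : Fin d) ≠ 0 := by
    simp [Fin.ext_iff, Fin.val_one, d]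
  apply le_antisymm
  · rintro _ ⟨u, rfl⟩
    simp only [LinearMap.mem_ker, sumLM, LinearMap.coe_mk, AddHom.coe_mk,
      Matrix.toLin'_apply, Matrix.mulVec, dotProduct, oneSharp]
    rw [Finset.sum_comm]
    apply Finset.sum_eq_zero
    intro j _
    have hne : j ≠ j + 1 := by
      intro hj
      exact hone (by linear_combination (norm := (push_cast; ring_nf)) hj.symm)
    have : ∀ i : Fin d, (if i = j then (1:ℂ) else if i = j + 1 then -1 else 0) * u j
        = (if i = j then u j else 0) + (if i = j + 1 then -u j else 0) := by
      intro i
      split_ifs with h1 h2 <;> simp_all <;> ring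
    simp_rw [this]
    rw [Finset.sum_add_distrib, Finset.sum_ite_eq', Finset.sum_ite_eq']
    simp
  · intro v hv
    simp only [LinearMap.mem_ker, sumLM, LinearMap.coe_mk, AddHom.coe_mk] at hv
    refine ⟨fun i => ∑ k ∈ Finset.range (i.val + 1), v (k : Fin d), ?_⟩
    funext i
    simp only [Matrix.toLin'_apply, Matrix.mulVec, dotProduct, oneSharp]
    have key : ∀ j : Fin d, (if i = j then (1:ℂ) else if i = j + 1 then -1 else 0) *
        (∑ k ∈ Finset.range (j.val + 1), v (k : Fin d))
        = (if j = i then ∑ k ∈ Finset.range (i.val + 1), v (k : Fin d) else 0)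
          + (if j = i - 1 then -∑ k ∈ Finset.range ((i-1).val + 1), v (k : Fin d) else 0) := by
      intro j
      have hiff : (i = j + 1) ↔ (j = i - 1) := by
        constructor <;> (intro hh; subst hh; ring)
      by_cases h1 : j = i
      · subst h1
        have h2 : ¬ (j = j - 1) := by
          intro hj
          exact hone (by linear_combination hj)
        simp [h2, hiff]
      · by_cases h2 : j = i - 1
        · have h3 : i = j + 1 := hiff.mpr h2
          have h4 : i ≠ j := fun hh => h1 hh.symm
          rw [if_neg h4, if_pos h3, if_neg h1, if_pos h2, ← h2]
          ring
        · have h4 : i ≠ j := fun hh => h1 hh.symm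
          have h5 : ¬ i = j + 1 := fun hh => h2 (hiff.mp hh)
          simp [h4, h5, h1, h2]
    simp_rw [key]
    rw [Finset.sum_add_distrib, Finset.sum_ite_eq', Finset.sum_ite_eq']
    simp only [Finset.mem_univ, if_true]
    by_cases h0 : i = 0
    · subst h0
      have hsub : ((0:Fin d) - 1).val = n + 1 := by
        rw [Fin.coe_sub_one]; simp
      rw [hsub]
      have hall : ∑ k ∈ Finset.range (n + 1 + 1), v (k : Fin d) = 0 := by
        rw [← hv, ← Fin.sum_univ_eq_sum_range (fun k => v (k : Fin d)) (n+2)]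
        simp [Fin.cast_val_eq_self]
      rw [hall]
      simp
    · have hsub : ((i:Fin d) - 1).val = i.val - 1 := by
        rw [Fin.coe_sub_one, if_neg h0]
      have hpos : 1 ≤ i.val := Nat.one_le_iff_ne_zero.mpr (fun hh => h0 (Fin.ext hh))
      rw [hsub]
      have : i.val - 1 + 1 = i.val := by omega
      rw [this]
      rw [Finset.sum_range_succ]
      simp [Fin.cast_val_eq_self]

/-- If `Ψ ⬝ K̃_α(x) ⬝ Φ⁻¹ = 1^#_d` for invertible diagonal matrices `Ψ`, `Φ`, then the
column space of `K̃_α(x)` is `{v : ∑ᵢ (Ψv)ᵢ = 0}`, and the functional `v ↦ ∑ᵢ (Ψv)ᵢ`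
induces an isomorphism from the cokernel of `K̃_α(x)` to `ℂ`. -/
theorem Kmat_coker_iso (d : ℕ) [NeZero d] (hd : 2 ≤ d) (a b : Fin d → ℂ)
    (x₀ x₁ : ℂ) (Ψ Φ : Matrix (Fin d) (Fin d) ℂ)
    (hΨd : Ψ.IsDiag) (hΦd : Φ.IsDiag) (hΨ : IsUnit Ψ) (hΦ : IsUnit Φ)
    (h : Ψ * Kmat d a b x₀ x₁ * Φ⁻¹ = oneSharp d) :
    LinearMap.range (Matrix.toLin' (Kmat d a b x₀ x₁)) =
      LinearMap.ker ((sumLM d).comp (Matrix.toLin' Ψ)) ∧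
    ∃ e : ((Fin d → ℂ) ⧸ LinearMap.range (Matrix.toLin' (Kmat d a b x₀ x₁))) ≃ₗ[ℂ] ℂ,
      ∀ v : Fin d → ℂ, e (Submodule.Quotient.mk v) = ∑ i, Ψ.mulVec v i := by
  obtain ⟨n, rfl⟩ : ∃ n, d = n + 2 := ⟨d - 2, by omega⟩
  set K := Kmat (n+2) a b x₀ x₁ with hKdef
  have hΨdet : IsUnit Ψ.det := (Matrix.isUnit_iff_isUnit_det Ψ).mp hΨ
  have hΦdet : IsUnit Φ.det := (Matrix.isUnit_iff_isUnit_det Φ).mp hΦ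
  have hK : Ψ * K = oneSharp (n+2) * Φ := by
    have : Ψ * K * Φ⁻¹ * Φ = oneSharp (n+2) * Φ := by rw [h]
    rwa [mul_assoc, Matrix.nonsing_inv_mul Φ hΦdet, mul_one] at this
  have hΨinj : Function.Injective (Matrix.toLin' Ψ) := by
    intro x y hxy
    simp only [Matrix.toLin'_apply] at hxy
    have := congrArg (Ψ⁻¹.mulVec) hxy
    simpa [Matrix.mulVec_mulVec, Matrix.nonsing_inv_mul Ψ hΨdet] using this
  have hΨsurj : Function.Surjective (Matrix.toLin' Ψ) := by
    intro y
    exact ⟨Ψ⁻¹.mulVec y, by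
      simp [Matrix.toLin'_apply, Matrix.mulVec_mulVec, Matrix.mul_nonsing_inv Ψ hΨdet]⟩
  have hΦsurj : Function.Surjective (Matrix.toLin' Φ) := by
    intro y
    exact ⟨Φ⁻¹.mulVec y, by
      simp [Matrix.toLin'_apply, Matrix.mulVec_mulVec, Matrix.mul_nonsing_inv Φ hΦdet]⟩
  have hmap : Submodule.map (Matrix.toLin' Ψ) (LinearMap.range (Matrix.toLin' K)) =
      LinearMap.ker (sumLM (n+2)) := by
    rw [← LinearMap.range_comp, ← Matrix.toLin'_mul, hK, Matrix.toLin'_mul,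
      LinearMap.range_comp, LinearMap.range_eq_top.mpr hΦsurj, Submodule.map_top,
      oneSharp_range]
  have key : LinearMap.range (Matrix.toLin' K) =
      LinearMap.ker ((sumLM (n+2)).comp (Matrix.toLin' Ψ)) := by
    rw [LinearMap.ker_comp, ← hmap, Submodule.comap_map_eq_of_injective hΨinj]
  refine ⟨key, ?_⟩
  have hsum : Function.Surjective (sumLM (n+2)) := by
    intro c
    exact ⟨Pi.single 0 c, by simp [sumLM]⟩
  have hfsurj : Function.Surjective ((sumLM (n+2)).comp (Matrix.toLin' Ψ)) :=
    hsum.comp hΨsurj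
  rw [key]
  refine ⟨LinearMap.quotKerEquivOfSurjective _ hfsurj, fun v => ?_⟩
  rw [LinearMap.quotKerEquivOfSurjective_apply_mk]
  simp [
    sumLM, Matrix.toLin'_apply]
end

section
/- Let d ≥ 2 be an integer, a, b : Fin d → ℂ with all a_i ≠ 0 and all b_i ≠ 0, and x₀, x₁ ∈ ℂ. Suppose Ψ and Φ are invertible diagonal d×d complex matrices with Ψ · K(a,b,x₀,x₁) · Φ⁻¹ = 1^#_d. Then for any ȧ, ḃ : Fin d → ℂ, the matrix Ψ · K(ȧ,ḃ,x₀,x₁) · Φ⁻¹ has (i,i) entry ȧ_i/a_i, (i+1, i) entry −ḃ_i/b_i (row index cyclically modulo d), and all other entries 0; consequently the row vector (1,…,1) · Ψ · K(ȧ,ḃ,x₀,x₁) · Φ⁻¹ has j-th entry ȧ_j/a_j − ḃ_j/b_j. (This is the lemma computing the map Hom(ℰ,ℱ)^G → Hom(ℰ, ℒ|_D)^G on a zig-zag path in terms of logarithmic derivatives of the edge weights.) -/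
/-- If `Ψ ⬝ K(a,b,x₀,x₁) ⬝ Φ⁻¹ = 1^#_d` for invertible diagonal `Ψ`, `Φ`, then for any
`ȧ, ḃ` the matrix `Ψ ⬝ K(ȧ,ḃ,x₀,x₁) ⬝ Φ⁻¹` has `(i,i)` entry `ȧᵢ/aᵢ`, `(i+1,i)` entry
`−ḃᵢ/bᵢ`, and all other entries `0`; consequently the row vector
`(1,…,1) ⬝ Ψ ⬝ K(ȧ,ḃ,x₀,x₁) ⬝ Φ⁻¹` has `j`-th entry `ȧⱼ/aⱼ − ḃⱼ/bⱼ`. -/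
theorem trivialized_Kmat_deformation (d : ℕ) [NeZero d] (hd : 2 ≤ d)
    (a b : Fin d → ℂ) (ha : ∀ i, a i ≠ 0) (hb : ∀ i, b i ≠ 0) (x₀ x₁ : ℂ)
    (Ψ Φ : Matrix (Fin d) (Fin d) ℂ)
    (hΨd : Ψ.IsDiag) (hΦd : Φ.IsDiag) (hΨ : IsUnit Ψ) (hΦ : IsUnit Φ)
    (h : Ψ * Kmat d a b x₀ x₁ * Φ⁻¹ = oneSharp d) (adot bdot : Fin d → ℂ) :
    (Ψ * Kmat d adot bdot x₀ x₁ * Φ⁻¹ =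
      fun i j => if i = j then adot j / a j
        else if i = j + 1 then -(bdot j / b j) else 0) ∧
    (∀ j : Fin d,
      Matrix.vecMul (fun _ => (1 : ℂ)) (Ψ * Kmat d adot bdot x₀ x₁ * Φ⁻¹) j =
        adot j / a j - bdot j / b j) := by
  have hj1 : ∀ j : Fin d, j + 1 ≠ j := by
    intro j hjj
    have h10 : (1 : Fin d) = 0 := by
      have := congrArg (fun x => x - j) hjj
      simpa using this
    rw [Fin.one_eq_zero_iff] at h10
    omega
  have hΦ0 : ∀ i, Φ.diag i ≠ 0 := by
    intro i h0
    have hdet : IsUnit Φ.det := (Matrix.isUnit_iff_isUnit_det Φ).mp hΦ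
    rw [← hΦd.diagonal_diag, Matrix.det_diagonal] at hdet
    rw [Finset.prod_eq_zero (Finset.mem_univ i) h0] at hdet
    exact absurd hdet (by simp)
  have hΦinv : Φ⁻¹ = Matrix.diagonal (fun i => (Φ.diag i)⁻¹) := by
    apply Matrix.inv_eq_right_inv
    have he : (fun i => Φ.diag i * (Φ.diag i)⁻¹) = fun _ => (1 : ℂ) := by
      funext i; exact mul_inv_cancel₀ (hΦ0 i)
    have key : Matrix.diagonal Φ.diag * Matrix.diagonal (fun i => (Φ.diag i)⁻¹) = 1 := by
      rw [Matrix.diagonal_mul_diagonal, he, Matrix.diagonal_one]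
    rwa [hΦd.diagonal_diag] at key
  set ψ := Ψ.diag with hψdef
  set φ := Φ.diag with hφdef
  have hentry : ∀ (c e : Fin d → ℂ) (i j : Fin d),
      (Ψ * Kmat d c e x₀ x₁ * Φ⁻¹) i j = ψ i * Kmat d c e x₀ x₁ i j * (φ j)⁻¹ := by
    intro c e i j
    rw [hΦinv]
    conv_lhs => rw [← hΨd.diagonal_diag]
    rw [Matrix.mul_diagonal, Matrix.diagonal_mul]
  have h1 : ∀ i, ψ i * (a i * x₀) * (φ i)⁻¹ = 1 := by
    intro i
    have := congrFun (congrFun h i) i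
    rw [hentry] at this
    simpa [Kmat, oneSharp] using this
  have h2 : ∀ j : Fin d, ψ (j + 1) * (b j * x₁) * (φ j)⁻¹ = -1 := by
    intro j
    have := congrFun (congrFun h (j + 1)) j
    rw [hentry] at this
    simpa [Kmat, oneSharp, hj1 j] using this
  have hmain : Ψ * Kmat d adot bdot x₀ x₁ * Φ⁻¹ =
      fun i j => if i = j then adot j / a j
        else if i = j + 1 then -(bdot j / b j) else 0 := by
    funext i j
    rw [hentry]
    show ψ i * Kmat d adot bdot x₀ x₁ i j * (φ j)⁻¹ =
      if i = j then adot j / a j else if i = j + 1 then -(bdot j / b j) else 0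
    by_cases hij : i = j
    · subst hij
      simp only [Kmat, if_pos rfl, eq_self_iff_true, if_true]
      have hh := h1 i
      field_simp [hΦ0 i, ha i] at hh ⊢
      linear_combination adot i * hh
    · by_cases hij' : i = j + 1
      · subst hij'
        simp only [Kmat, if_neg (hj1 j), if_neg hij, if_pos rfl, eq_self_iff_true, if_true]
        have hh := h2 j
        field_simp [hΦ0 j, hb j] at hh ⊢
        linear_combination bdot j * hh
      · simp [Kmat, hij, hij']
  refine ⟨hmain, fun j => ?_⟩
  rw [hmain]
  simp only [Matrix.vecMul, dotProduct, one_mul]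
  have hsplit : ∀ i : Fin d,
      (if i = j then adot j / a j else if i = j + 1 then -(bdot j / b j) else 0) =
      (if i = j then adot j / a j else 0) + (if i = j + 1 then -(bdot j / b j) else 0) := by
    intro i
    have hne : j ≠ j + 1 := fun hh => hj1 j hh.symm
    by_cases hij : i = j
    · subst hij
      rw [if_pos rfl, if_pos rfl, if_neg hne, add_zero]
    · rw [if_neg hij, if_neg hij, zero_add]
  rw [Finset.sum_congr rfl (fun i _ => hsplit i), Finset.sum_add_distrib,
    Finset.sum_ite_eq' Finset.univ j (fun _ => adot j / a j),
    Finset.sum_ite_eq' Finset.univ (j + 1) (fun _ => -(bdot j / b j))]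
  simp [sub_eq_add_neg]
end
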